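/- The parity polytope satisfies PAR_n = conv(⋃_{k even, 0 ≤ k ≤ n} S_k), where S_k = {x ∈ [-1,1]ⁿ : ∑_{i=1}^n x_i = n − 2k} is the k-th slice of the hypercube, and moreover S_k = conv{x ∈ {-1,1}ⁿ : x has exactly k coordinates equal to −1}. -/

import Mathlib

/-- The parity polytope `PAR_n`. -/
def PAR (n : ℕ) : Set (Fin n → ℝ) :=
  convexHull ℝ {x : Fin n → ℝ | (∀ i, x i = 1 ∨ x i = -1) ∧ ∏ i, x i = 1}

/-- The `k`-th slice of the hypercube: `{x ∈ [-1,1]ⁿ : ∑ᵢ xᵢ = n - 2k}`. -/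
def cubeSlice (n k : ℕ) : Set (Fin n → ℝ) :=
  {x | (∀ i, x i ∈ Set.Icc (-1 : ℝ) 1) ∧ ∑ i, x i = (n : ℝ) - 2 * k}

/-- `±1` vectors with exactly `k` coordinates `-1`. -/
def Vset (n k : ℕ) : Set (Fin n → ℝ) :=
  {x : Fin n → ℝ | (∀ i, x i = 1 ∨ x i = -1) ∧ {i : Fin n | x i = -1}.ncard = k}

open Classical in
/-- The set of "fractional" coordinates. -/
noncomputable def Fset {n : ℕ} (x : Fin n → ℝ) : Finset (Fin n) :=
  Finset.univ.filter (fun i => x i ≠ 1 ∧ x i ≠ -1)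

lemma sum_pm_aux {n : ℕ} (x : Fin n → ℝ) (t : Finset (Fin n))
    (h : ∀ j ∈ t, x j = 1 ∨ x j = -1) :
    ∑ j ∈ t, x j = (t.card : ℝ) - 2 * ((t.filter (fun j => x j = -1)).card : ℝ) := by
  classical
  have h1 : ∑ j ∈ t.filter (fun j => x j = -1), x j
      = -(((t.filter (fun j => x j = -1)).card : ℝ)) := by
    rw [Finset.sum_congr rfl (fun j hj => (Finset.mem_filter.mp hj).2)]
    simp
  have h2 : ∑ j ∈ t.filter (fun j => ¬ x j = -1), x j
      = ((t.filter (fun j => ¬ x j = -1)).card : ℝ) := by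
    rw [Finset.sum_congr rfl (fun j hj => show x j = 1 from ?_)]
    · simp
    · have hj' := Finset.mem_filter.mp hj
      rcases h j hj'.1 with h' | h'
      · exact h'
      · exact absurd h' hj'.2
  have h3 : (t.filter (fun j => x j = -1)).card
      + (t.filter (fun j => ¬ x j = -1)).card = t.card :=
    Finset.card_filter_add_card_filter_not (p := fun j => x j = -1)
  have h4 : ((t.filter (fun j => ¬ x j = -1)).card : ℝ)
      = (t.card : ℝ) - ((t.filter (fun j => x j = -1)).card : ℝ) := by
    rw [← h3]
    push_cast
    ring
  rw [← Finset.sum_filter_add_sum_filter_not t (fun j => x j = -1), h1, h2, h4]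
  ring

lemma ncard_neg_one {n : ℕ} (x : Fin n → ℝ) :
    {i : Fin n | x i = -1}.ncard = (Finset.univ.filter (fun i => x i = -1)).card := by
  classical
  have : {i : Fin n | x i = -1} = ↑(Finset.univ.filter (fun i => x i = -1)) := by
    ext i; simp
  rw [this, Set.ncard_coe_finset]

lemma Vset_subset_slice (n k : ℕ) : Vset n k ⊆ cubeSlice n k := by
  rintro x ⟨hpm, hcard⟩
  have hc : ((Finset.univ.filter (fun i => x i = -1)).card : ℕ) = k := by
    rw [← ncard_neg_one]; exact hcard
  refine ⟨fun i => ?_, ?_⟩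
  · rcases hpm i with h | h <;> rw [h] <;> constructor <;> norm_num
  · rw [sum_pm_aux x Finset.univ (fun j _ => hpm j), hc]
    simp

lemma convex_cubeSlice (n k : ℕ) : Convex ℝ (cubeSlice n k) := by
  rintro x ⟨hx1, hx2⟩ y ⟨hy1, hy2⟩ a b ha hb hab
  constructor
  · intro i
    have e : (a • x + b • y) i = a * x i + b * y i := by simp
    rw [e]
    have p1 : a * (-1) ≤ a * x i := mul_le_mul_of_nonneg_left (hx1 i).1 ha
    have p2 : b * (-1) ≤ b * y i := mul_le_mul_of_nonneg_left (hy1 i).1 hb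
    have p3 : a * x i ≤ a * 1 := mul_le_mul_of_nonneg_left (hx1 i).2 ha
    have p4 : b * y i ≤ b * 1 := mul_le_mul_of_nonneg_left (hy1 i).2 hb
    constructor <;> nlinarith
  · have e : ∑ i, (a • x + b • y) i = a * (∑ i, x i) + b * (∑ i, y i) := by
      simp [Finset.sum_add_distrib, Finset.mul_sum]
    rw [e, hx2, hy2]
    nlinarith [hab]

/-- The parity obstruction: a point of the slice cannot have exactly one
fractional coordinate. -/
lemma card_Fset_ne_one {n k : ℕ} {x : Fin n → ℝ} (hx : x ∈ cubeSlice n k) :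
    (Fset x).card ≠ 1 := by
  classical
  intro h1
  obtain ⟨i, hi⟩ := Finset.card_eq_one.mp h1
  have hifrac : x i ≠ 1 ∧ x i ≠ -1 := by
    have : i ∈ Fset x := by rw [hi]; exact Finset.mem_singleton_self i
    exact (Finset.mem_filter.mp this).2
  have hpm : ∀ j ∈ Finset.univ.erase i, x j = 1 ∨ x j = -1 := by
    intro j hj
    have hji : j ≠ i := (Finset.mem_erase.mp hj).1
    by_contra hc
    push_neg at hc
    have : j ∈ Fset x := Finset.mem_filter.mpr ⟨Finset.mem_univ _, hc⟩
    rw [hi, Finset.mem_singleton] at this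
    exact hji this
  set a := ((Finset.univ.erase i).filter (fun j => x j = -1)).card with ha
  have hsum := sum_pm_aux x (Finset.univ.erase i) hpm
  have hcarderase : (Finset.univ.erase i).card = n - 1 := by
    rw [Finset.card_erase_of_mem (Finset.mem_univ i)]
    simp
  have hn1 : 1 ≤ n := Nat.one_le_iff_ne_zero.mpr (by
    rintro rfl; exact absurd i.2 (by omega))
  have hsplit : x i + ∑ j ∈ Finset.univ.erase i, x j = (n : ℝ) - 2 * k := by
    rw [Finset.add_sum_erase _ _ (Finset.mem_univ i)]
    exact hx.2
  have hxi : x i = 1 - 2 * (k : ℝ) + 2 * (a : ℝ) := by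
    rw [hsum, hcarderase] at hsplit
    have : ((n - 1 : ℕ) : ℝ) = (n : ℝ) - 1 := by
      push_cast [Nat.cast_sub hn1]; ring
    rw [this] at hsplit
    linarith
  have hb1 : -1 < x i := lt_of_le_of_ne (hx.1 i).1 (Ne.symm hifrac.2)
  have hb2 : x i < 1 := lt_of_le_of_ne (hx.1 i).2 hifrac.1
  rw [hxi] at hb1 hb2
  have g1 : (-1 : ℝ) < (a : ℤ) - (k : ℤ) := by push_cast; linarith
  have g2 : ((a : ℤ) - (k : ℤ) : ℝ) < 0 := by push_cast; linarith
  have g1' : (-1 : ℤ) < (a : ℤ) - (k : ℤ) := by exact_mod_cast g1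
  have g2' : ((a : ℤ) - (k : ℤ)) < 0 := by exact_mod_cast g2
  omega

/-- The coordinate-moving map. -/
def moveFn {n : ℕ} (x : Fin n → ℝ) (i j : Fin n) (ε : ℝ) : Fin n → ℝ :=
  fun l => if l = i then x l + ε else if l = j then x l - ε else x l

lemma moveFn_sum {n : ℕ} (x : Fin n → ℝ) (i j : Fin n) (hij : i ≠ j) (ε : ℝ) :
    ∑ l, moveFn x i j ε l = ∑ l, x l := by
  classical
  have key : ∀ l, moveFn x i j ε l
      = x l + ((if l = i then ε else 0) + (if l = j then -ε else 0)) := by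
    intro l
    by_cases h1 : l = i
    · subst h1
      have : l ≠ j := hij
      simp [moveFn, this]
    · by_cases h2 : l = j
      · subst h2
        simp [moveFn, h1, sub_eq_add_neg]
      · simp [moveFn, h1, h2]
  rw [Finset.sum_congr rfl (fun l _ => key l)]
  rw [Finset.sum_add_distrib, Finset.sum_add_distrib]
  simp [Finset.sum_ite_eq']

lemma moveFn_mem {n k : ℕ} {x : Fin n → ℝ} (hx : x ∈ cubeSlice n k)
    {i j : Fin n} (hij : i ≠ j) (hi : i ∈ Fset x) (hj : j ∈ Fset x) :
    moveFn x i j (min (1 - x i) (x j + 1)) ∈ cubeSlice n k ∧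
      (Fset (moveFn x i j (min (1 - x i) (x j + 1)))).card < (Fset x).card := by
  classical
  set ε := min (1 - x i) (x j + 1) with hε
  have hifr := (Finset.mem_filter.mp hi).2
  have hjfr := (Finset.mem_filter.mp hj).2
  have hxi1 : x i < 1 := lt_of_le_of_ne (hx.1 i).2 hifr.1
  have hxi2 : -1 < x i := lt_of_le_of_ne (hx.1 i).1 (Ne.symm hifr.2)
  have hxj1 : x j < 1 := lt_of_le_of_ne (hx.1 j).2 hjfr.1
  have hxj2 : -1 < x j := lt_of_le_of_ne (hx.1 j).1 (Ne.symm hjfr.2)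
  have hεpos : 0 < ε := lt_min (by linarith) (by linarith)
  have hε1 : ε ≤ 1 - x i := min_le_left _ _
  have hε2 : ε ≤ x j + 1 := min_le_right _ _
  set y := moveFn x i j ε with hy
  have hyi : y i = x i + ε := by simp [hy, moveFn]
  have hyj : y j = x j - ε := by simp [hy, moveFn, hij, Ne.symm hij]
  have hyl : ∀ l, l ≠ i → l ≠ j → y l = x l := by
    intro l h1 h2; simp [hy, moveFn, h1, h2]
  have hmem : y ∈ cubeSlice n k := by
    refine ⟨fun l => ?_, ?_⟩
    · by_cases h1 : l = i
      · subst h1; rw [hyi]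
        constructor <;> linarith
      · by_cases h2 : l = j
        · subst h2; rw [hyj]
          constructor <;> linarith
        · rw [hyl l h1 h2]; exact hx.1 l
    · rw [hy, moveFn_sum x i j hij ε]; exact hx.2
  refine ⟨hmem, ?_⟩
  have hsub : Fset y ⊆ Fset x := by
    intro l hl
    by_cases h1 : l = i
    · subst h1; exact hi
    · by_cases h2 : l = j
      · subst h2; exact hj
      · have := (Finset.mem_filter.mp hl).2
        rw [hyl l h1 h2] at this
        exact Finset.mem_filter.mpr ⟨Finset.mem_univ _, this⟩
  have hwit : ∃ l ∈ Fset x, l ∉ Fset y := by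
    rcases min_cases (1 - x i) (x j + 1) with ⟨hmin, _⟩ | ⟨hmin, _⟩
    · refine ⟨i, hi, ?_⟩
      intro hmem'
      have := (Finset.mem_filter.mp hmem').2.1
      apply this
      rw [hyi, hε, hmin]; ring
    · refine ⟨j, hj, ?_⟩
      intro hmem'
      have := (Finset.mem_filter.mp hmem').2.2
      apply this
      rw [hyj, hε, hmin]; ring
  obtain ⟨l, hl1, hl2⟩ := hwit
  exact Finset.card_lt_card ((Finset.ssubset_iff_of_subset hsub).mpr ⟨l, hl1, hl2⟩)

lemma slice_subset_hull (n k : ℕ) :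
    cubeSlice n k ⊆ convexHull ℝ (Vset n k) := by
  classical
  suffices H : ∀ m : ℕ, ∀ x ∈ cubeSlice n k, (Fset x).card ≤ m →
      x ∈ convexHull ℝ (Vset n k) by
    intro x hx
    exact H (Fset x).card x hx le_rfl
  intro m
  induction m with
  | zero =>
    intro x hx hcard
    have hall : ∀ l, x l = 1 ∨ x l = -1 := by
      intro l
      by_contra hc
      push_neg at hc
      have : l ∈ Fset x := Finset.mem_filter.mpr ⟨Finset.mem_univ _, hc⟩
      have := Finset.card_pos.mpr ⟨l, this⟩
      omega
    have hsum := sum_pm_aux x Finset.univ (fun j _ => hall j)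
    rw [hx.2] at hsum
    have hcards : ((Finset.univ.filter (fun j => x j = -1)).card : ℝ) = (k : ℝ) := by
      have : (((Finset.univ : Finset (Fin n)).card : ℕ) : ℝ) = (n : ℝ) := by simp
      rw [this] at hsum
      linarith
    have hcn : (Finset.univ.filter (fun j => x j = -1)).card = k := by exact_mod_cast hcards
    apply subset_convexHull
    exact ⟨hall, by rw [ncard_neg_one]; exact hcn⟩
  | succ m ih =>
    intro x hx hcard
    by_cases h0 : (Fset x).card ≤ m
    · exact ih x hx h0
    · have hc1 : (Fset x).card = m + 1 := by omega
      have hge2 : 1 < (Fset x).card := by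
        have := card_Fset_ne_one hx
        omega
      obtain ⟨i, hi, j, hj, hij⟩ := Finset.one_lt_card.mp hge2
      set ε₁ := min (1 - x i) (x j + 1) with hε₁
      set ε₂ := min (1 - x j) (x i + 1) with hε₂
      obtain ⟨hymem, hycard⟩ := moveFn_mem hx hij hi hj
      obtain ⟨hzmem, hzcard⟩ := moveFn_mem hx (Ne.symm hij) hj hi
      set y := moveFn x i j ε₁ with hy
      set z := moveFn x j i ε₂ with hz
      have hyhull : y ∈ convexHull ℝ (Vset n k) := ih y hymem (by omega)
      have hzhull : z ∈ convexHull ℝ (Vset n k) := ih z hzmem (by omega)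
      have hifr := (Finset.mem_filter.mp hi).2
      have hjfr := (Finset.mem_filter.mp hj).2
      have hxi1 : x i < 1 := lt_of_le_of_ne (hx.1 i).2 hifr.1
      have hxi2 : -1 < x i := lt_of_le_of_ne (hx.1 i).1 (Ne.symm hifr.2)
      have hxj1 : x j < 1 := lt_of_le_of_ne (hx.1 j).2 hjfr.1
      have hxj2 : -1 < x j := lt_of_le_of_ne (hx.1 j).1 (Ne.symm hjfr.2)
      have hε₁pos : 0 < ε₁ := lt_min (by linarith) (by linarith)
      have hε₂pos : 0 < ε₂ := lt_min (by linarith) (by linarith)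
      have hden : 0 < ε₁ + ε₂ := by linarith
      set a := ε₂ / (ε₁ + ε₂) with haeq
      set b := ε₁ / (ε₁ + ε₂) with hbeq
      have ha : 0 ≤ a := le_of_lt (div_pos hε₂pos hden)
      have hb : 0 ≤ b := le_of_lt (div_pos hε₁pos hden)
      have hab : a + b = 1 := by
        rw [haeq, hbeq, ← add_div]
        field_simp
        ring
      have hxeq : x = a • y + b • z := by
        funext l
        have e : (a • y + b • z) l = a * y l + b * z l := by simp
        rw [e]
        by_cases h1 : l = i
        · subst h1
          have e1 : y l = x l + ε₁ := by simp [hy, moveFn]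
          have e2 : z l = x l - ε₂ := by simp [hz, moveFn, hij]
          rw [e1, e2, haeq, hbeq]
          field_simp
          ring
        · by_cases h2 : l = j
          · subst h2
            have e1 : y l = x l - ε₁ := by simp [hy, moveFn, h1]
            have e2 : z l = x l + ε₂ := by simp [hz, moveFn]
            rw [e1, e2, haeq, hbeq]
            field_simp
            ring
          · have e1 : y l = x l := by simp [hy, moveFn, h1, h2]
            have e2 : z l = x l := by simp [hz, moveFn, h1, h2]
            rw [e1, e2]
            linear_combination (-(x l)) * hab
      rw [hxeq]
      exact convex_convexHull ℝ (Vset n k) hyhull hzhull ha hb hab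

lemma slice_eq_hull (n k : ℕ) :
    cubeSlice n k = convexHull ℝ (Vset n k) :=
  le_antisymm (slice_subset_hull n k)
    (convexHull_min (Vset_subset_slice n k) (convex_cubeSlice n k))

lemma prod_pm {n : ℕ} (x : Fin n → ℝ) (hpm : ∀ i, x i = 1 ∨ x i = -1) :
    ∏ i, x i = (-1 : ℝ) ^ (Finset.univ.filter (fun i => x i = -1)).card := by
  classical
  rw [← Finset.prod_filter_mul_prod_filter_not Finset.univ (fun i => x i = -1)]
  have h1 : ∏ j ∈ Finset.univ.filter (fun i => x i = -1), x j
      = (-1 : ℝ) ^ (Finset.univ.filter (fun i => x i = -1)).card := by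
    rw [Finset.prod_congr rfl (fun j hj => (Finset.mem_filter.mp hj).2)]
    simp
  have h2 : ∏ j ∈ Finset.univ.filter (fun i => ¬ x i = -1), x j = 1 := by
    rw [Finset.prod_congr rfl (fun j hj => show x j = 1 from ?_)]
    · simp
    · rcases hpm j with h' | h'
      · exact h'
      · exact absurd h' (Finset.mem_filter.mp hj).2
  rw [h1, h2, mul_one]

lemma Vprod_eq (n : ℕ) :
    {x : Fin n → ℝ | (∀ i, x i = 1 ∨ x i = -1) ∧ ∏ i, x i = 1}
      = ⋃ k ∈ {k : ℕ | k ≤ n ∧ Even k}, Vset n k := by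
  classical
  ext x
  simp only [Set.mem_iUnion, Set.mem_setOf_eq, exists_prop]
  constructor
  · rintro ⟨hpm, hprod⟩
    set c := (Finset.univ.filter (fun i => x i = -1)).card with hc
    have heven : Even c := by
      have h := prod_pm x hpm
      rw [hprod] at h
      exact (neg_one_pow_eq_one_iff_even (by norm_num : (-1 : ℝ) ≠ 1)).mp h.symm
    refine ⟨c, ⟨?_, heven⟩, hpm, by rw [ncard_neg_one]⟩
    have hle := Finset.card_filter_le (Finset.univ : Finset (Fin n)) (fun i => x i = -1)
    simpa using hle
  · rintro ⟨k, ⟨_, hke⟩, hpm, hcard⟩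
    refine ⟨hpm, ?_⟩
    rw [prod_pm x hpm, ← ncard_neg_one, hcard]
    exact hke.neg_one_pow

theorem PAR_eq_convexHull_even_slices (n : ℕ) :
    PAR n = convexHull ℝ (⋃ k ∈ {k : ℕ | k ≤ n ∧ Even k}, cubeSlice n k) ∧
      ∀ k ≤ n,
        cubeSlice n k =
          convexHull ℝ
            {x : Fin n → ℝ |
              (∀ i, x i = 1 ∨ x i = -1) ∧ {i : Fin n | x i = -1}.ncard = k} := by
  constructor
  · apply le_antisymm
    · -- PAR ⊆ conv(⋃ slices)
      rw [PAR, Vprod_eq]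
      apply convexHull_mono
      intro x hx
      simp only [Set.mem_iUnion, exists_prop] at hx ⊢
      obtain ⟨k, hk, hxk⟩ := hx
      exact ⟨k, hk, Vset_subset_slice n k hxk⟩
    · -- conv(⋃ slices) ⊆ PAR
      rw [PAR, Vprod_eq]
      apply convexHull_min ?_ (convex_convexHull ℝ _)
      intro x hx
      simp only [Set.mem_iUnion, exists_prop] at hx
      obtain ⟨k, hk, hxk⟩ := hx
      have : x ∈ convexHull ℝ (Vset n k) := slice_subset_hull n k hxk
      refine convexHull_mono ?_ this
      intro y hy
      simp only [Set.mem_iUnion, exists_prop]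
      exact ⟨k, hk, hy⟩
  · intro k _
    exact slice_eq_hull n k
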